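/- The graceful chromatic number of the complete graph K_6 is 11; a graceful 11-coloring is given by assigning the six vertices the colors 1, 2, 4, 5, 10, 11. -/

import Mathlib

/-- The induced edge coloring `g*(ab) = |g a - g b|` is proper: any two edges sharing a
vertex receive distinct values. -/
def GracefulEdgeProper {V : Type*} (G : SimpleGraph V) (g : V → ℕ) : Prop :=
  ∀ a b c : V, G.Adj a b → G.Adj a c → b ≠ c →
    Nat.dist (g a) (g b) ≠ Nat.dist (g a) (g c)

/-- A graceful coloring: a proper vertex coloring by positive integers whose induced
edge coloring is proper. -/
def IsGracefulColoring {V : Type*} (G : SimpleGraph V) (g : V → ℕ) : Prop :=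
  (∀ v, 1 ≤ g v) ∧ (∀ a b : V, G.Adj a b → g a ≠ g b) ∧ GracefulEdgeProper G g

/-- A graceful `l`-coloring: a proper vertex coloring with colors in `{1, …, l}` whose
induced edge coloring is proper. -/
def IsGracefulLColoring {V : Type*} (G : SimpleGraph V) (l : ℕ) (g : V → ℕ) : Prop :=
  (∀ v, g v ∈ Finset.Icc 1 l) ∧ (∀ a b : V, G.Adj a b → g a ≠ g b) ∧ GracefulEdgeProper G g

/-- The graceful chromatic number: the least `l ≥ 2` admitting a graceful `l`-coloring. -/
noncomputable def gracefulChromaticNumber {V : Type*} (G : SimpleGraph V) : ℕ :=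
  sInf {l | 2 ≤ l ∧ ∃ g : V → ℕ, IsGracefulLColoring G l g}

/-- A finite set of naturals is 3-AP-free: no three distinct elements `a, b, c`
with `b - a = c - b`. -/
def ThreeAPFreeSet (S : Finset ℕ) : Prop :=
  ∀ a ∈ S, ∀ b ∈ S, ∀ c ∈ S, a ≠ b → b ≠ c → a ≠ c → (b : ℤ) - (a : ℤ) ≠ (c : ℤ) - (b : ℤ)

/-- Any six distinct integers in `{1,…,10}` contain a 3-term arithmetic progression. -/
private lemma noAP10 : ∀ a b c d e f : ℕ, 1 ≤ a → a < b → b < c → c < d → d < e → e < f →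
    f ≤ 10 →
    (a + c = 2*b ∨ a + d = 2*b ∨ a + e = 2*b ∨ a + f = 2*b ∨
     a + d = 2*c ∨ a + e = 2*c ∨ a + f = 2*c ∨ b + d = 2*c ∨
     a + e = 2*d ∨ a + f = 2*d ∨ b + e = 2*d ∨ b + f = 2*d ∨ c + e = 2*d ∨
     a + f = 2*e ∨ b + f = 2*e ∨ c + f = 2*e ∨ d + f = 2*e ∨
     b + e = 2*c ∨ b + f = 2*c ∨ c + f = 2*d) := by
  omega

private lemma list_six {α : Type*} (l : List α) (h : l.length = 6) :
    ∃ a b c d e f, l = [a, b, c, d, e, f] := by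
  match l, h with
  | [a, b, c, d, e, f], _ => exact ⟨a, b, c, d, e, f, rfl⟩

/-- The explicit coloring is a graceful 11-coloring of `K₆`. -/
private lemma witness11 :
    IsGracefulLColoring (⊤ : SimpleGraph (Fin 6)) 11 ![1, 2, 4, 5, 10, 11] := by
  unfold IsGracefulLColoring GracefulEdgeProper
  decide

/-- No graceful coloring of `K₆` with colors in `{1,…,10}`. -/
private lemma no10 (g : Fin 6 → ℕ) (h : IsGracefulLColoring (⊤ : SimpleGraph (Fin 6)) 10 g) :
    False := by
  obtain ⟨hbd, hproper, hedge⟩ := h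
  -- the coloring is injective
  have hinj : Function.Injective g := by
    intro u v huv
    by_contra hne
    exact hproper u v (by simp [hne]) huv
  set S : Finset ℕ := Finset.univ.image g with hSdef
  -- no 3-AP among values of S
  have hS : ∀ x ∈ S, ∀ y ∈ S, ∀ z ∈ S, x ≠ y → y ≠ z → x ≠ z → x + z ≠ 2 * y := by
    intro x hx y hy z hz hxy hyz hxz hap
    simp only [hSdef, Finset.mem_image, Finset.mem_univ, true_and] at hx hy hz
    obtain ⟨u, rfl⟩ := hx
    obtain ⟨v, rfl⟩ := hy
    obtain ⟨w, rfl⟩ := hz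
    have h1 : (⊤ : SimpleGraph (Fin 6)).Adj v u := by
      simp only [SimpleGraph.top_adj]; exact fun hc => hxy (by rw [hc])
    have h2 : (⊤ : SimpleGraph (Fin 6)).Adj v w := by
      simp only [SimpleGraph.top_adj]; exact fun hc => hyz (by rw [hc])
    have h3 : u ≠ w := fun hc => hxz (by rw [hc])
    have := hedge v u w h1 h2 h3
    simp only [Nat.dist] at this
    omega
  have hcard : S.card = 6 := by
    rw [hSdef, Finset.card_image_of_injective _ hinj, Finset.card_univ, Fintype.card_fin]
  have hlen : (S.sort (· ≤ ·)).length = 6 := by rw [Finset.length_sort, hcard]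
  obtain ⟨a, b, c, d, e, f, hl⟩ := list_six _ hlen
  have hsorted : List.Pairwise (· < ·) (S.sort (· ≤ ·)) := (Finset.sortedLT_sort S).pairwise
  rw [hl] at hsorted
  simp only [List.pairwise_cons, List.mem_cons, List.not_mem_nil,
    List.Pairwise.nil, and_true, List.mem_nil_iff, forall_eq_or_imp, forall_eq] at hsorted
  obtain ⟨⟨hab, hac, had, hae, haf, -⟩, ⟨hbc, hbd', hbe, hbf, -⟩, ⟨hcd, hce, hcf, -⟩,
    ⟨hde, hdf, -⟩, ⟨hef, -⟩, -⟩ := hsorted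
  have mem : ∀ x ∈ [a, b, c, d, e, f], x ∈ S := by
    intro x hx
    rw [← Finset.mem_sort (· ≤ ·), hl]
    exact hx
  have ha : a ∈ S := mem a (by simp)
  have hb : b ∈ S := mem b (by simp)
  have hc : c ∈ S := mem c (by simp)
  have hd : d ∈ S := mem d (by simp)
  have he : e ∈ S := mem e (by simp)
  have hf : f ∈ S := mem f (by simp)
  have hbound : ∀ x ∈ S, 1 ≤ x ∧ x ≤ 10 := by
    intro x hx
    simp only [hSdef, Finset.mem_image, Finset.mem_univ, true_and] at hx
    obtain ⟨v, rfl⟩ := hx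
    have := hbd v
    simpa [Finset.mem_Icc] using this
  have h1a := (hbound a ha).1
  have h10f := (hbound f hf).2
  rcases noAP10 a b c d e f h1a hab hbc hcd hde hef h10f with
      h|h|h|h|h|h|h|h|h|h|h|h|h|h|h|h|h|h|h|h
  · exact hS a ha b hb c hc (by omega) (by omega) (by omega) h
  · exact hS a ha b hb d hd (by omega) (by omega) (by omega) h
  · exact hS a ha b hb e he (by omega) (by omega) (by omega) h
  · exact hS a ha b hb f hf (by omega) (by omega) (by omega) h
  · exact hS a ha c hc d hd (by omega) (by omega) (by omega) h
  · exact hS a ha c hc e he (by omega) (by omega) (by omega) h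
  · exact hS a ha c hc f hf (by omega) (by omega) (by omega) h
  · exact hS b hb c hc d hd (by omega) (by omega) (by omega) h
  · exact hS a ha d hd e he (by omega) (by omega) (by omega) h
  · exact hS a ha d hd f hf (by omega) (by omega) (by omega) h
  · exact hS b hb d hd e he (by omega) (by omega) (by omega) h
  · exact hS b hb d hd f hf (by omega) (by omega) (by omega) h
  · exact hS c hc d hd e he (by omega) (by omega) (by omega) h
  · exact hS a ha e he f hf (by omega) (by omega) (by omega) h
  · exact hS b hb e he f hf (by omega) (by omega) (by omega) h
  · exact hS c hc e he f hf (by omega) (by omega) (by omega) h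
  · exact hS d hd e he f hf (by omega) (by omega) (by omega) h
  · exact hS b hb c hc e he (by omega) (by omega) (by omega) h
  · exact hS b hb c hc f hf (by omega) (by omega) (by omega) h
  · exact hS c hc d hd f hf (by omega) (by omega) (by omega) h

theorem gracefulChromatic_K6 :
    gracefulChromaticNumber (⊤ : SimpleGraph (Fin 6)) = 11 ∧
      IsGracefulLColoring (⊤ : SimpleGraph (Fin 6)) 11 ![1, 2, 4, 5, 10, 11] := by
  refine ⟨?_, witness11⟩
  have h11 : (11 : ℕ) ∈ {l | 2 ≤ l ∧
      ∃ g : Fin 6 → ℕ, IsGracefulLColoring (⊤ : SimpleGraph (Fin 6)) l g} :=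
    ⟨by norm_num, ![1, 2, 4, 5, 10, 11], witness11⟩
  refine le_antisymm (Nat.sInf_le h11) ?_
  refine le_csInf ⟨11, h11⟩ ?_
  rintro m ⟨-, g, hg, hproper, hedge⟩
  by_contra hlt
  push_neg at hlt
  have hm10 : m ≤ 10 := by omega
  refine no10 g ⟨fun v => ?_, hproper, hedge⟩
  have := hg v
  simp only [Finset.mem_Icc] at this ⊢
  omega
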